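/- Let F : ℝⁿ → ℝⁿ be continuously differentiable with F(z*) = 0. Then F is strongly monotone near z* (i.e., there exist η > 0 and a ball around z* on which ⟨F(z₁)−F(z₂), z₁−z₂⟩ ≥ η‖z₁−z₂‖²) if and only if the Jacobian DF(z*) is coercive, i.e., ⟨x, DF(z*)x⟩ ≥ η*‖x‖² for some η* > 0 and all x. -/

import Mathlib

open scoped RealInnerProductSpace

/-- a C¹ map is locally strongly monotone near a root iff its Jacobian
at the root is coercive. -/
theorem strongMonotone_near_root_iff_jacobian_coercive
    {n : ℕ} (F : EuclideanSpace ℝ (Fin n) → EuclideanSpace ℝ (Fin n))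
    (hF : ContDiff ℝ 1 F)
    (zs : EuclideanSpace ℝ (Fin n)) (hzs : F zs = 0) :
    (∃ η > (0 : ℝ), ∃ δ > (0 : ℝ),
        ∀ z₁ ∈ Metric.ball zs δ, ∀ z₂ ∈ Metric.ball zs δ,
          η * ‖z₁ - z₂‖ ^ 2 ≤ ⟪F z₁ - F z₂, z₁ - z₂⟫) ↔
      (∃ ηs > (0 : ℝ), ∀ x, ηs * ‖x‖ ^ 2 ≤ ⟪x, fderiv ℝ F zs x⟫) := by
  have hdiff : Differentiable ℝ F := hF.differentiable one_ne_zero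
  constructor
  · rintro ⟨η, hη, δ, hδ, h⟩
    refine ⟨η, hη, fun x => ?_⟩
    rcases eq_or_ne x 0 with rfl | hx
    · simp
    have hxn : (0 : ℝ) < ‖x‖ := norm_pos_iff.2 hx
    -- curve c t = zs + t • x
    have hc : ∀ t : ℝ, HasDerivAt (fun s : ℝ => zs + s • x) x t := by
      intro t
      simpa using ((hasDerivAt_id t).smul_const x).const_add zs
    set g : ℝ → ℝ := fun t => ⟪F (zs + t • x) - F zs, x⟫ with hg_def
    have hg : HasDerivAt g ⟪fderiv ℝ F zs x, x⟫ 0 := by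
      have h1 : HasDerivAt (fun t : ℝ => F (zs + t • x)) (fderiv ℝ F zs x) 0 := by
        have := (hdiff (zs + (0 : ℝ) • x)).hasFDerivAt.comp_hasDerivAt 0 (hc 0)
        simp only [zero_smul, add_zero] at this
        exact this
      have h2 := (h1.sub_const (F zs)).inner ℝ (hasDerivAt_const (0 : ℝ) x)
      simpa using h2
    have hslope : Filter.Tendsto (slope g 0) (nhdsWithin 0 (Set.Ioi 0))
        (nhds ⟪fderiv ℝ F zs x, x⟫) :=
      (hasDerivAt_iff_tendsto_slope.1 hg).mono_left
        (nhdsWithin_mono 0 (fun t ht => Set.mem_compl_singleton_iff.2 (ne_of_gt ht)))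
    have hev : ∀ᶠ t in nhdsWithin (0:ℝ) (Set.Ioi 0), η * ‖x‖ ^ 2 ≤ slope g 0 t := by
      filter_upwards [Ioo_mem_nhdsGT_of_mem
        (Set.mem_Ico.2 ⟨le_refl (0:ℝ), div_pos hδ hxn⟩)] with t ht
      obtain ⟨ht0, htδ⟩ := ht
      have hz₁ : zs + t • x ∈ Metric.ball zs δ := by
        rw [Metric.mem_ball, dist_eq_norm]
        simp only [add_sub_cancel_left, norm_smul, Real.norm_eq_abs, abs_of_pos ht0]
        calc t * ‖x‖ < (δ / ‖x‖) * ‖x‖ := by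
              exact mul_lt_mul_of_pos_right htδ hxn
          _ = δ := div_mul_cancel₀ δ (ne_of_gt hxn)
      have hz₂ : zs ∈ Metric.ball zs δ := Metric.mem_ball_self hδ
      have hkey := h (zs + t • x) hz₁ zs hz₂
      have hsub : zs + t • x - zs = t • x := by abel
      rw [hsub] at hkey
      have hnorm : ‖t • x‖ ^ 2 = t ^ 2 * ‖x‖ ^ 2 := by
        rw [norm_smul, Real.norm_eq_abs, mul_pow, sq_abs]
      rw [hnorm, real_inner_smul_right] at hkey
      -- hkey : η * (t ^ 2 * ‖x‖ ^ 2) ≤ t * ⟪F (zs + t • x) - F zs, x⟫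
      have hg0 : g 0 = 0 := by simp [hg_def]
      have hst : slope g 0 t = g t / t := by
        rw [slope_def_field, hg0, sub_zero, sub_zero]
      rw [hst, le_div_iff₀ ht0]
      calc η * ‖x‖ ^ 2 * t = η * (t * ‖x‖ ^ 2) := by ring
        _ ≤ g t := by
            rcases le_or_gt (η * (t * ‖x‖ ^ 2)) (g t) with h' | h'
            · exact h'
            · exfalso
              have : t * (η * (t * ‖x‖ ^ 2)) ≤ t * g t := by
                calc t * (η * (t * ‖x‖ ^ 2)) = η * (t ^ 2 * ‖x‖ ^ 2) := by ring
                  _ ≤ t * g t := hkey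
              have := le_of_mul_le_mul_left this ht0
              linarith
    have hle : η * ‖x‖ ^ 2 ≤ ⟪fderiv ℝ F zs x, x⟫ :=
      ge_of_tendsto hslope hev
    rwa [real_inner_comm] at hle
  · rintro ⟨ηs, hηs, hco⟩
    -- get δ from continuity of the derivative
    have hcont : ContinuousAt (fderiv ℝ F) zs :=
      (hF.continuous_fderiv one_ne_zero).continuousAt
    rw [Metric.continuousAt_iff] at hcont
    obtain ⟨δ, hδ, hclose⟩ := hcont (ηs / 2) (by linarith)
    refine ⟨ηs / 2, by linarith, δ, hδ, fun z₁ hz₁ z₂ hz₂ => ?_⟩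
    set d : EuclideanSpace ℝ (Fin n) := z₁ - z₂ with hd_def
    set φ : ℝ → ℝ := fun t => ⟪F (z₂ + t • d), d⟫ with hφ_def
    have hc : ∀ t : ℝ, HasDerivAt (fun s : ℝ => z₂ + s • d) d t := by
      intro t
      simpa using ((hasDerivAt_id t).smul_const d).const_add z₂
    have hφ : ∀ t : ℝ, HasDerivAt φ ⟪fderiv ℝ F (z₂ + t • d) d, d⟫ t := by
      intro t
      have h1 : HasDerivAt (fun s : ℝ => F (z₂ + s • d)) (fderiv ℝ F (z₂ + t • d) d) t :=
        (hdiff (z₂ + t • d)).hasFDerivAt.comp_hasDerivAt t (hc t)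
      have h2 := h1.inner ℝ (hasDerivAt_const t d)
      simpa using h2
    have hmem : ∀ t ∈ Set.Icc (0:ℝ) 1, z₂ + t • d ∈ Metric.ball zs δ := by
      intro t ht
      have := (convex_ball zs δ) hz₂ hz₁ (by linarith [ht.2] : (0:ℝ) ≤ 1 - t) ht.1
        (by ring)
      convert this using 1
      rw [hd_def]
      module
    have hderiv_ge : ∀ t ∈ interior (Set.Icc (0:ℝ) 1),
        ηs / 2 * ‖d‖ ^ 2 ≤ deriv φ t := by
      intro t ht
      rw [interior_Icc] at ht
      have htI : t ∈ Set.Icc (0:ℝ) 1 := ⟨le_of_lt ht.1, le_of_lt ht.2⟩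
      rw [(hφ t).deriv]
      set p := z₂ + t • d with hp
      have hp_ball : p ∈ Metric.ball zs δ := hmem t htI
      have hB : ‖fderiv ℝ F p - fderiv ℝ F zs‖ < ηs / 2 := by
        have := hclose (Metric.mem_ball.1 hp_ball)
        rwa [dist_eq_norm] at this
      have hsplit : ⟪fderiv ℝ F p d, d⟫ =
          ⟪fderiv ℝ F zs d, d⟫ + ⟪(fderiv ℝ F p - fderiv ℝ F zs) d, d⟫ := by
        simp [inner_sub_left]
      have h1 : ηs * ‖d‖ ^ 2 ≤ ⟪fderiv ℝ F zs d, d⟫ := by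
        have := hco d
        rwa [real_inner_comm] at this
      have h2 : |⟪(fderiv ℝ F p - fderiv ℝ F zs) d, d⟫| ≤ ηs / 2 * ‖d‖ ^ 2 := by
        calc |⟪(fderiv ℝ F p - fderiv ℝ F zs) d, d⟫|
            ≤ ‖(fderiv ℝ F p - fderiv ℝ F zs) d‖ * ‖d‖ := abs_real_inner_le_norm _ _
          _ ≤ (‖fderiv ℝ F p - fderiv ℝ F zs‖ * ‖d‖) * ‖d‖ := by
              exact mul_le_mul_of_nonneg_right
                ((fderiv ℝ F p - fderiv ℝ F zs).le_opNorm d) (norm_nonneg d)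
          _ ≤ (ηs / 2 * ‖d‖) * ‖d‖ := by
              exact mul_le_mul_of_nonneg_right
                (mul_le_mul_of_nonneg_right (le_of_lt hB) (norm_nonneg d)) (norm_nonneg d)
          _ = ηs / 2 * ‖d‖ ^ 2 := by ring
      have h2' : -(ηs / 2 * ‖d‖ ^ 2) ≤ ⟪(fderiv ℝ F p - fderiv ℝ F zs) d, d⟫ :=
        neg_le_of_abs_le h2
      rw [hsplit]
      nlinarith [sq_nonneg ‖d‖]
    have hmvt := (convex_Icc (0:ℝ) 1).mul_sub_le_image_sub_of_le_deriv
      (fun t _ => (hφ t).continuousAt.continuousWithinAt)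
      (fun t _ => ((hφ t).differentiableAt).differentiableWithinAt)
      hderiv_ge 0 (Set.mem_Icc.2 ⟨le_refl 0, zero_le_one⟩)
      1 (Set.mem_Icc.2 ⟨zero_le_one, le_refl 1⟩) zero_le_one
    have hφ1 : φ 1 = ⟪F z₁, d⟫ := by
      have h1 : z₂ + (1:ℝ) • d = z₁ := by rw [hd_def]; module
      simp only [hφ_def, h1]
    have hφ0 : φ 0 = ⟪F z₂, d⟫ := by simp [hφ_def]
    rw [hφ1, hφ0, sub_zero, mul_one] at hmvt
    calc ηs / 2 * ‖z₁ - z₂‖ ^ 2 = ηs / 2 * ‖d‖ ^ 2 := by rw [hd_def]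
      _ ≤ ⟪F z₁, d⟫ - ⟪F z₂, d⟫ := hmvt
      _ = ⟪F z₁ - F z₂, z₁ - z₂⟫ := by rw [hd_def, inner_sub_left]
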